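/- Assume the gradient of f is c-strongly monotone on Z for some c > 0, i.e. ⟨∇f(x) − ∇f(y), x − y⟩ ≥ c‖x − y‖² for all x, y ∈ Z. Let (z*, μ*) be a saddle point of L over Z × ℝᵐ₊ satisfying the primal feasibility and complementarity conditions g(z*) ≤ 0 (componentwise) and ⟨μ*, g(z*)⟩ = 0, and let (z*_φ, μ*_φ) be a saddle point of L_φ over Z × ℝᵐ₊. Then ‖z*_φ − z*‖² ≤ (φ / (2c)) (‖μ*‖² − ‖μ*_φ‖²). -/

import Mathlib

open scoped InnerProductSpace

open Set Filter Topology in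
lemma deriv_nonneg_of_min_zero {ψ : ℝ → ℝ} {d : ℝ} (hd : HasDerivAt ψ d 0)
    (hmin : ∀ t ∈ Set.Icc (0:ℝ) 1, ψ 0 ≤ ψ t) : 0 ≤ d := by
  have h := (hd.hasDerivWithinAt (s := Set.Ioi 0))
  rw [hasDerivWithinAt_iff_tendsto_slope' (notMem_Ioi_self)] at h
  refine ge_of_tendsto h ?_
  filter_upwards [self_mem_nhdsWithin, eventually_nhdsWithin_of_eventually_nhds
    (eventually_lt_nhds (by norm_num : (0:ℝ) < 1))] with t ht ht1
  rw [slope_def_field]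
  have h1 := hmin t ⟨le_of_lt ht, le_of_lt ht1⟩
  have ht0 : (0:ℝ) < t := ht
  apply div_nonneg (by linarith) (by linarith)

open Set Filter Topology in
lemma deriv_nonpos_of_min_one {ψ : ℝ → ℝ} {d : ℝ} (hd : HasDerivAt ψ d 1)
    (hmin : ∀ t ∈ Set.Icc (0:ℝ) 1, ψ 1 ≤ ψ t) : d ≤ 0 := by
  have h := (hd.hasDerivWithinAt (s := Set.Iio 1))
  rw [hasDerivWithinAt_iff_tendsto_slope' (notMem_Iio_self)] at h
  refine le_of_tendsto h ?_
  filter_upwards [self_mem_nhdsWithin, eventually_nhdsWithin_of_eventually_nhds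
    (eventually_gt_nhds (by norm_num : (0:ℝ) < 1))] with t ht ht0
  rw [slope_def_field]
  have h1 := hmin t ⟨le_of_lt ht0, le_of_lt ht⟩
  have ht1 : t < 1 := ht
  exact div_nonpos_of_nonneg_of_nonpos (by linarith) (by linarith)

/-- discrepancy bound between the saddle point of the Lagrangian
`L(z,μ) = f(z) + ⟨μ, g(z)⟩` and of the regularized Lagrangian
`L_φ(z,μ) = L(z,μ) − (φ/2)‖μ‖²` over `Z × ℝᵐ₊`:
`‖z*_φ − z*‖² ≤ (φ/(2c)) (‖μ*‖² − ‖μ*_φ‖²)`. -/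
theorem regularization_discrepancy {n m : ℕ}
    (Z : Set (EuclideanSpace ℝ (Fin n)))
    (hZne : Z.Nonempty) (hZcomp : IsCompact Z) (hZconv : Convex ℝ Z)
    (f : EuclideanSpace ℝ (Fin n) → ℝ)
    (f' : EuclideanSpace ℝ (Fin n) → EuclideanSpace ℝ (Fin n))
    (hf : ∀ x, HasGradientAt f (f' x) x)
    (g : EuclideanSpace ℝ (Fin n) → EuclideanSpace ℝ (Fin m))
    (hgdiff : ∀ j, Differentiable ℝ (fun z => g z j))
    (hgconv : ∀ j, ConvexOn ℝ Set.univ (fun z => g z j))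
    (φ c : ℝ) (hφ : 0 < φ) (hc : 0 < c)
    -- ∇f is c-strongly monotone on Z
    (hmono : ∀ x ∈ Z, ∀ y ∈ Z, c * ‖x - y‖ ^ 2 ≤ ⟪f' x - f' y, x - y⟫_ℝ)
    -- (z*, μ*): saddle point of L over Z × ℝᵐ₊, primal feasible and complementary
    (zs : EuclideanSpace ℝ (Fin n)) (μs : EuclideanSpace ℝ (Fin m))
    (hzs : zs ∈ Z) (hμs : ∀ j, 0 ≤ μs j)
    (hsaddle : ∀ z ∈ Z, ∀ μ : EuclideanSpace ℝ (Fin m), (∀ j, 0 ≤ μ j) →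
      f zs + ∑ j, μ j * g zs j ≤ f zs + ∑ j, μs j * g zs j ∧
      f zs + ∑ j, μs j * g zs j ≤ f z + ∑ j, μs j * g z j)
    (hfeas : ∀ j, g zs j ≤ 0)
    (hcomp : ∑ j, μs j * g zs j = 0)
    -- (z*_φ, μ*_φ): saddle point of L_φ over Z × ℝᵐ₊
    (zφ : EuclideanSpace ℝ (Fin n)) (μφ : EuclideanSpace ℝ (Fin m))
    (hzφ : zφ ∈ Z) (hμφ : ∀ j, 0 ≤ μφ j)
    (hsaddleφ : ∀ z ∈ Z, ∀ μ : EuclideanSpace ℝ (Fin m), (∀ j, 0 ≤ μ j) →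
      f zφ + (∑ j, μ j * g zφ j) - φ / 2 * ‖μ‖ ^ 2 ≤
        f zφ + (∑ j, μφ j * g zφ j) - φ / 2 * ‖μφ‖ ^ 2 ∧
      f zφ + (∑ j, μφ j * g zφ j) - φ / 2 * ‖μφ‖ ^ 2 ≤
        f z + (∑ j, μφ j * g z j) - φ / 2 * ‖μφ‖ ^ 2) :
    ‖zφ - zs‖ ^ 2 ≤ φ / (2 * c) * (‖μs‖ ^ 2 - ‖μφ‖ ^ 2) := by
  set v : EuclideanSpace ℝ (Fin n) := zφ - zs with hv
  set γ : ℝ → EuclideanSpace ℝ (Fin n) := fun t => zs + t • v with hγ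
  have hγ0 : γ 0 = zs := by simp [hγ]
  have hγ1 : γ 1 = zφ := by simp [hγ, hv]
  have hγZ : ∀ t ∈ Set.Icc (0:ℝ) 1, γ t ∈ Z := by
    intro t ht
    have h1 := hZconv hzs hzφ (by linarith [ht.2] : (0:ℝ) ≤ 1 - t) ht.1 (by ring)
    have h2 : (1 - t) • zs + t • zφ = γ t := by
      simp only [hγ, hv]
      module
    rwa [h2] at h1
  have hcurve : ∀ t : ℝ, HasDerivAt γ v t := by
    intro t
    simpa [hγ] using ((hasDerivAt_id t).smul_const v).const_add zs
  have hfd : ∀ t : ℝ, HasDerivAt (fun s => f (γ s)) ⟪f' (γ t), v⟫_ℝ t := by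
    intro t
    have := ((hf (γ t)).hasFDerivAt).comp_hasDerivAt t (hcurve t)
    simpa [InnerProductSpace.toDual_apply_apply, Function.comp_def] using this
  set D : Fin m → ℝ → ℝ := fun j t => fderiv ℝ (fun z => g z j) (γ t) v with hD
  have hgd : ∀ (j : Fin m) (t : ℝ), HasDerivAt (fun s => g (γ s) j) (D j t) t := by
    intro j t
    exact ((hgdiff j (γ t)).hasFDerivAt).comp_hasDerivAt t (hcurve t)
  have hGconv : ∀ j, ConvexOn ℝ Set.univ (fun t : ℝ => g (γ t) j) := by
    intro j
    have h := (hgconv j).comp_affineMap (AffineMap.lineMap zs zφ : ℝ →ᵃ[ℝ] _)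
    have heq : ∀ t : ℝ, (AffineMap.lineMap zs zφ : ℝ →ᵃ[ℝ] _) t = γ t := by
      intro t
      simp only [AffineMap.lineMap_apply_module, hγ, hv]
      module
    have h2 : ConvexOn ℝ Set.univ ((fun z => g z j) ∘ (AffineMap.lineMap zs zφ : ℝ →ᵃ[ℝ] _)) := by
      simpa using h
    exact h2.congr (fun t _ => by simp [Function.comp, heq t])
  -- slope bounds from convexity
  have hslope : ∀ j, D j 0 ≤ g zφ j - g zs j ∧ g zφ j - g zs j ≤ D j 1 := by
    intro j
    have h1 := (hGconv j).le_slope_of_hasDerivAt (Set.mem_univ 0) (Set.mem_univ 1)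
      one_pos (hgd j 0)
    have h2 := (hGconv j).slope_le_of_hasDerivAt (Set.mem_univ 0) (Set.mem_univ 1)
      one_pos (hgd j 1)
    rw [slope_def_field] at h1 h2
    rw [hγ0, hγ1] at h1 h2
    constructor <;> [skip; skip] <;> · simp only [sub_zero, div_one] at h1 h2; linarith
  -- VI at zs
  have hVI0 : 0 ≤ ⟪f' zs, v⟫_ℝ + ∑ j, μs j * D j 0 := by
    have hder : HasDerivAt (fun t => f (γ t) + ∑ j, μs j * g (γ t) j)
        (⟪f' (γ 0), v⟫_ℝ + ∑ j, μs j * D j 0) 0 :=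
      (hfd 0).add (HasDerivAt.fun_sum fun j _ => (hgd j 0).const_mul (μs j))
    rw [hγ0] at hder
    refine deriv_nonneg_of_min_zero hder ?_
    intro t ht
    have := (hsaddle (γ t) (hγZ t ht) μs hμs).2
    simpa [hγ0] using this
  -- VI at zφ
  have hVI1 : ⟪f' zφ, v⟫_ℝ + ∑ j, μφ j * D j 1 ≤ 0 := by
    have hder : HasDerivAt (fun t => f (γ t) + ∑ j, μφ j * g (γ t) j)
        (⟪f' (γ 1), v⟫_ℝ + ∑ j, μφ j * D j 1) 1 :=
      (hfd 1).add (HasDerivAt.fun_sum fun j _ => (hgd j 1).const_mul (μφ j))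
    rw [hγ1] at hder
    refine deriv_nonpos_of_min_one hder ?_
    intro t ht
    have := (hsaddleφ (γ t) (hγZ t ht) μφ hμφ).2
    simp only [hγ1] at this ⊢
    linarith
  -- strong monotonicity
  have hsm : c * ‖v‖ ^ 2 ≤ ⟪f' zφ, v⟫_ℝ - ⟪f' zs, v⟫_ℝ := by
    have := hmono zφ hzφ zs hzs
    rw [← hv] at this
    rwa [inner_sub_left] at this
  -- sum bounds
  have hs1 : ∑ j, μs j * D j 0 ≤ ∑ j, μs j * (g zφ j - g zs j) :=
    Finset.sum_le_sum fun j _ => mul_le_mul_of_nonneg_left (hslope j).1 (hμs j)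
  have hs2 : ∑ j, μφ j * (g zφ j - g zs j) ≤ ∑ j, μφ j * D j 1 :=
    Finset.sum_le_sum fun j _ => mul_le_mul_of_nonneg_left (hslope j).2 (hμφ j)
  have hexp : ∀ μ : EuclideanSpace ℝ (Fin m),
      ∑ j, μ j * (g zφ j - g zs j) = (∑ j, μ j * g zφ j) - ∑ j, μ j * g zs j := by
    intro μ
    rw [← Finset.sum_sub_distrib]
    exact Finset.sum_congr rfl fun j _ => by ring
  rw [hexp] at hs1 hs2
  have hneg : ∑ j, μφ j * g zs j ≤ 0 :=
    Finset.sum_nonpos fun j _ => mul_nonpos_of_nonneg_of_nonpos (hμφ j) (hfeas j)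
  have hkey := (hsaddleφ zs hzs μs hμs).1
  have hmain : c * ‖v‖ ^ 2 ≤ φ / 2 * (‖μs‖ ^ 2 - ‖μφ‖ ^ 2) := by linarith
  have hrw : φ / (2 * c) * (‖μs‖ ^ 2 - ‖μφ‖ ^ 2)
      = (φ / 2 * (‖μs‖ ^ 2 - ‖μφ‖ ^ 2)) / c := by
    field_simp
  rw [hrw, le_div_iff₀ hc]
  linarith
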